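/- Let G be a finite 2-group in which every element of order 2 is central (the 2C condition). Then E = {g ∈ G : g² = 1} is a central elementary abelian subgroup of G, say of rank n, and there exist an integer m ≥ 0 and a free continuous action of G on X = (S^m)^n such that the orbit space X/E (with the quotient topology) is homeomorphic to (ℝP^m)^n. -/

import Mathlib

set_option linter.unusedSectionVars false
set_option maxHeartbeats 1000000

noncomputable section


/-- The unit sphere `S^m` in `ℝ^{m+1}`. -/
abbrev Sph (m : ℕ) : Type := Metric.sphere (0 : EuclideanSpace ℝ (Fin (m + 1))) 1

/-- The antipodal relation on the sphere `S^m`. -/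
def antipodal (m : ℕ) (x y : Sph m) : Prop :=
  (y : EuclideanSpace ℝ (Fin (m + 1))) = (x : EuclideanSpace ℝ (Fin (m + 1))) ∨
    (y : EuclideanSpace ℝ (Fin (m + 1))) = -(x : EuclideanSpace ℝ (Fin (m + 1)))

/-- Real projective `m`-space: the quotient of `S^m` by the antipodal map,
with the quotient topology. -/
abbrev RP (m : ℕ) : Type := Quot (antipodal m)



section Part1
variable {G : Type} [Group G] [Finite G]

lemma mem_center_of_sq (h2C : ∀ g : G, orderOf g = 2 → g ∈ Subgroup.center G)
    {g : G} (hg : g * g = 1) : g ∈ Subgroup.center G := by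
  rcases eq_or_ne g 1 with rfl | hne
  · exact Subgroup.one_mem _
  · exact h2C g (orderOf_eq_prime (by rwa [pow_two]) hne)

def Esub (h2C : ∀ g : G, orderOf g = 2 → g ∈ Subgroup.center G) : Subgroup G where
  carrier := {g | g * g = 1}
  one_mem' := by simp
  inv_mem' := by
    intro a ha
    have h1 : a * a = 1 := ha
    have : a⁻¹ = a := by
      rw [inv_eq_iff_mul_eq_one, h1]
    simp [this, h1]
  mul_mem' := by
    intro a b ha hb
    have h1 : a * a = 1 := ha
    have h2 : b * b = 1 := hb
    have hc := Subgroup.mem_center_iff.mp (mem_center_of_sq h2C h1) b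
    show a * b * (a * b) = 1
    calc a * b * (a * b) = a * (b * a) * b := by group
    _ = a * (a * b) * b := by rw [hc]
    _ = (a * a) * (b * b) := by group
    _ = 1 := by rw [h1, h2, one_mul]

lemma exists_iso (E : Subgroup G) (hsq : ∀ z : E, (z : G) * z = 1)
    (hc : E ≤ Subgroup.center G) :
    ∃ n : ℕ, Nat.card E = 2 ^ n ∧ Nonempty (E ≃* Multiplicative (Fin n → ZMod 2)) := by
  letI : CommGroup E :=
    { (inferInstance : Group E) with
      mul_comm := fun a b => Subtype.ext ((Subgroup.mem_center_iff.mp (hc a.2) b).symm) }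
  letI : Module (ZMod 2) (Additive E) := AddCommGroup.zmodModule (by
    intro x
    rw [two_nsmul]
    show x + x = 0
    have : x.toMul * x.toMul = (1 : E) := Subtype.ext (hsq x.toMul)
    exact this)
  letI : Fintype E := Fintype.ofFinite _
  haveI : Module.Finite (ZMod 2) (Additive E) := Module.Finite.of_finite
  set n := Module.finrank (ZMod 2) (Additive E) with hn
  refine ⟨n, ?_, ?_⟩
  · have h := Module.card_eq_pow_finrank (K := ZMod 2) (V := Additive E)
    rw [Nat.card_eq_fintype_card]
    simpa [ZMod.card] using h
  · have b := Module.finBasis (ZMod 2) (Additive E)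
    exact ⟨AddEquiv.toMultiplicativeRight b.equivFun.toAddEquiv⟩

end Part1



section Part2
variable {G : Type} [Group G] [Fintype G] {E : Subgroup G} {n : ℕ}

def sgn (b : ZMod 2) : ℝ := if b = 1 then -1 else 1

lemma sgn_zero : sgn 0 = 1 := by simp [sgn]

lemma sgn_add (a b : ZMod 2) : sgn (a + b) = sgn a * sgn b := by
  rcases (by decide : ∀ x : ZMod 2, x = 0 ∨ x = 1) a with rfl | rfl <;> rcases (by decide : ∀ x : ZMod 2, x = 0 ∨ x = 1) b with rfl | rfl <;> simp [sgn, (by decide : (0:ZMod 2) ≠ 1), (by decide : (1:ZMod 2) + 1 = 0)] <;> norm_num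

lemma sgn_cases (a : ZMod 2) : sgn a = 1 ∨ sgn a = -1 := by
  rcases (by decide : ∀ x : ZMod 2, x = 0 ∨ x = 1) a with rfl | rfl <;> simp [sgn, (by decide : (0:ZMod 2) ≠ 1), (by decide : (1:ZMod 2) + 1 = 0)]

lemma sgn_ne_zero (a : ZMod 2) : sgn a ≠ 0 := by
  rcases sgn_cases a with h | h <;> rw [h] <;> norm_num

lemma sgn_eq_neg_one {a : ZMod 2} (h : a ≠ 0) : sgn a = -1 := by
  rcases (by decide : ∀ x : ZMod 2, x = 0 ∨ x = 1) a with rfl | rfl <;> simp_all [sgn, (by decide : (0:ZMod 2) ≠ 1), (by decide : (1:ZMod 2) + 1 = 0)]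

variable (ψ : E ≃* Multiplicative (Fin n → ZMod 2))

def chi (j : Fin n) (z : E) : ℝ := sgn ((ψ z).toAdd j)

lemma chi_mul (j : Fin n) (z w : E) : chi ψ j (z * w) = chi ψ j z * chi ψ j w := by
  unfold chi
  rw [map_mul]
  exact sgn_add _ _

lemma chi_one (j : Fin n) : chi ψ j 1 = 1 := by
  unfold chi
  rw [map_one]
  exact sgn_zero

lemma chi_cases (j : Fin n) (z : E) : chi ψ j z = 1 ∨ chi ψ j z = -1 := sgn_cases _

lemma chi_sq (j : Fin n) (z : E) : chi ψ j z * chi ψ j z = 1 := by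
  rcases chi_cases ψ j z with h | h <;> rw [h] <;> norm_num

/-- The isotypic subspace of the regular representation. -/
def Wsub (j : Fin n) : Submodule ℝ (EuclideanSpace ℝ G) where
  carrier := {f | ∀ (z : E) (x : G), f ((z : G) * x) = chi ψ j z * f x}
  zero_mem' := by intro z x; simp
  add_mem' := by
    intro f g hf hg z x
    simp only [PiLp.add_apply, hf z x, hg z x]; ring
  smul_mem' := by
    intro c f hf z x
    simp only [PiLp.smul_apply, hf z x, smul_eq_mul]; ring

/-- Right translation action on the regular representation. -/
def rho0 (g : G) : EuclideanSpace ℝ G ≃ₗᵢ[ℝ] EuclideanSpace ℝ G :=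
  LinearIsometryEquiv.piLpCongrLeft 2 ℝ ℝ (Equiv.mulRight g).symm

lemma rho0_apply (g : G) (f : EuclideanSpace ℝ G) (x : G) : rho0 g f x = f (x * g) := rfl

lemma rho0_mem {j : Fin n} {f : EuclideanSpace ℝ G} (hf : f ∈ Wsub ψ j) (g : G) :
    rho0 g f ∈ Wsub ψ j := by
  intro z x
  rw [rho0_apply, rho0_apply, mul_assoc]
  exact hf z (x * g)

/-- The action restricted to the isotypic subspace. -/
def LW (j : Fin n) (g : G) : Wsub ψ j →ₗᵢ[ℝ] Wsub ψ j where
  toLinearMap := (((rho0 g).toLinearEquiv.toLinearMap).comp (Wsub ψ j).subtype).codRestrict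
    (Wsub ψ j) (fun f => rho0_mem ψ f.2 g)
  norm_map' := by
    intro f
    show ‖(⟨rho0 g f.1, _⟩ : Wsub ψ j)‖ = ‖f‖
    have h1 : ‖(⟨rho0 g f.1, rho0_mem ψ f.2 g⟩ : Wsub ψ j)‖ = ‖rho0 g f.1‖ := rfl
    have h2 : ‖f‖ = ‖f.1‖ := rfl
    rw [h1, h2, (rho0 g).norm_map]

lemma LW_coe (j : Fin n) (g : G) (f : Wsub ψ j) :
    ((LW ψ j g f : Wsub ψ j) : EuclideanSpace ℝ G) = rho0 g f.1 := rfl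

lemma LW_one (j : Fin n) (f : Wsub ψ j) : LW ψ j 1 f = f := by
  apply Subtype.ext
  rw [LW_coe]
  ext x
  rw [rho0_apply, mul_one]

lemma LW_mul (j : Fin n) (g h : G) (f : Wsub ψ j) :
    LW ψ j (g * h) f = LW ψ j g (LW ψ j h f) := by
  apply Subtype.ext
  rw [LW_coe, LW_coe, LW_coe]
  ext x
  rw [rho0_apply, rho0_apply, rho0_apply, mul_assoc]

lemma LW_pow (j : Fin n) (g : G) (k : ℕ) (f : Wsub ψ j) (hf : LW ψ j g f = f) :
    LW ψ j (g ^ k) f = f := by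
  induction k with
  | zero => simpa using LW_one ψ j f
  | succ k ih => rw [pow_succ, LW_mul, hf, ih]

lemma LW_scalar (hc : E ≤ Subgroup.center G) (j : Fin n) (z : E) (f : Wsub ψ j) :
    LW ψ j (z : G) f = chi ψ j z • f := by
  apply Subtype.ext
  rw [LW_coe]
  ext x
  rw [rho0_apply]
  have hcomm : x * (z : G) = (z : G) * x := Subgroup.mem_center_iff.mp (hc z.2) x
  rw [hcomm, f.2 z x]
  rfl

section Dim
variable (E)

/-- For `x : G`, the element of `E` relating `x` to its chosen coset representative. -/
def zOf (hc : E ≤ Subgroup.center G) (x : G) : E :=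
  ⟨((QuotientGroup.mk x : G ⧸ E).out)⁻¹ * x, by
    rw [← QuotientGroup.eq]
    exact QuotientGroup.out_eq' _⟩

lemma zOf_spec (hc : E ≤ Subgroup.center G) (x : G) :
    (zOf E hc x : G) * (QuotientGroup.mk x : G ⧸ E).out = x := by
  have hz : ((zOf E hc x : G)) = ((QuotientGroup.mk x : G ⧸ E).out)⁻¹ * x := rfl
  have hcen := Subgroup.mem_center_iff.mp (hc (zOf E hc x).2)
  rw [← hcen]
  rw [hz]
  group

lemma mk_mul_mem (hc : E ≤ Subgroup.center G) (z : E) (x : G) :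
    (QuotientGroup.mk ((z : G) * x) : G ⧸ E) = QuotientGroup.mk x := by
  rw [QuotientGroup.eq]
  have hinv := Subgroup.mem_center_iff.mp (Subgroup.inv_mem _ (hc z.2)) x
  have h1 : ((z : G) * x)⁻¹ * x = (z : G)⁻¹ := by
    rw [mul_inv_rev, mul_assoc, ← hinv]; group
  rw [h1]
  exact Subgroup.inv_mem _ z.2

lemma zOf_mul (hc : E ≤ Subgroup.center G) (z : E) (x : G) :
    zOf E hc ((z : G) * x) = z * zOf E hc x := by
  apply Subtype.ext
  show ((QuotientGroup.mk ((z:G)*x) : G ⧸ E).out)⁻¹ * ((z:G) * x)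
      = (z : G) * (((QuotientGroup.mk x : G ⧸ E).out)⁻¹ * x)
  rw [mk_mul_mem E hc z x]
  have hcen := Subgroup.mem_center_iff.mp (hc z.2)
  set A := ((QuotientGroup.mk x : G ⧸ E)).out with hA
  calc A⁻¹ * ((z : G) * x) = (A⁻¹ * (z : G)) * x := by rw [mul_assoc]
  _ = ((z : G) * A⁻¹) * x := by rw [hcen]
  _ = (z : G) * (A⁻¹ * x) := by rw [mul_assoc]

end Dim

/-- Evaluation on coset representatives gives a linear equivalence between the isotypic
subspace and functions on the coset space. -/
def WEquiv (hc : E ≤ Subgroup.center G) (j : Fin n) :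
    Wsub ψ j ≃ₗ[ℝ] ((G ⧸ E) → ℝ) := by
  refine Equiv.toLinearEquiv
    { toFun := fun f q => (f : EuclideanSpace ℝ G) q.out
      invFun := fun F => ⟨WithLp.toLp 2 (fun x => chi ψ j (zOf E hc x) * F (QuotientGroup.mk x)), ?_⟩
      left_inv := ?_
      right_inv := ?_ } ?_
  · intro z x
    show chi ψ j (zOf E hc ((z:G) * x)) * F (QuotientGroup.mk ((z:G)*x))
        = chi ψ j z * (chi ψ j (zOf E hc x) * F (QuotientGroup.mk x))
    rw [zOf_mul E hc z x, chi_mul, mk_mul_mem E hc z x]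
    ring
  · intro f
    apply Subtype.ext
    ext x
    show chi ψ j (zOf E hc x) * (f : EuclideanSpace ℝ G) (QuotientGroup.mk x : G ⧸ E).out = _
    rw [← f.2 (zOf E hc x) ((QuotientGroup.mk x : G ⧸ E)).out, zOf_spec E hc x]
  · intro F
    funext q
    show chi ψ j (zOf E hc q.out) * F (QuotientGroup.mk q.out) = F q
    have h1 : (QuotientGroup.mk q.out : G ⧸ E) = q := QuotientGroup.out_eq' q
    have h2 : zOf E hc q.out = 1 := by
      apply Subtype.ext
      show ((QuotientGroup.mk q.out : G ⧸ E)).out⁻¹ * q.out = 1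
      rw [h1]
      group
    rw [h1, h2, chi_one, one_mul]
  · constructor
    · intro f g; rfl
    · intro c f; rfl

lemma finrank_W (hc : E ≤ Subgroup.center G) (j : Fin n) :
    Module.finrank ℝ (Wsub ψ j) = Nat.card (G ⧸ E) := by
  letI : Fintype (G ⧸ E) := Fintype.ofFinite _
  rw [(WEquiv ψ hc j).finrank_eq, Module.finrank_pi, Nat.card_eq_fintype_card]

section Bmaps
variable {m : ℕ}

/-- Orthonormal coordinates on the isotypic subspace. -/
def Tiso (j : Fin n) (hrank : Module.finrank ℝ (Wsub ψ j) = m + 1) :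
    Wsub ψ j ≃ₗᵢ[ℝ] EuclideanSpace ℝ (Fin (m + 1)) :=
  ((stdOrthonormalBasis ℝ (Wsub ψ j)).reindex (finCongr hrank)).repr

/-- The action transported to Euclidean space. -/
def Bmap (j : Fin n) (hrank : Module.finrank ℝ (Wsub ψ j) = m + 1) (g : G) :
    EuclideanSpace ℝ (Fin (m + 1)) →ₗᵢ[ℝ] EuclideanSpace ℝ (Fin (m + 1)) :=
  (Tiso ψ j hrank).toLinearIsometry.comp
    ((LW ψ j g).comp (Tiso ψ j hrank).symm.toLinearIsometry)

lemma Bmap_apply (j : Fin n) (hrank : Module.finrank ℝ (Wsub ψ j) = m + 1) (g : G)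
    (v : EuclideanSpace ℝ (Fin (m + 1))) :
    Bmap ψ j hrank g v = Tiso ψ j hrank (LW ψ j g ((Tiso ψ j hrank).symm v)) := rfl

lemma Bmap_one (j : Fin n) (hrank : Module.finrank ℝ (Wsub ψ j) = m + 1)
    (v : EuclideanSpace ℝ (Fin (m + 1))) : Bmap ψ j hrank 1 v = v := by
  rw [Bmap_apply, LW_one, LinearIsometryEquiv.apply_symm_apply]

lemma Bmap_mul (j : Fin n) (hrank : Module.finrank ℝ (Wsub ψ j) = m + 1) (g h : G)
    (v : EuclideanSpace ℝ (Fin (m + 1))) :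
    Bmap ψ j hrank (g * h) v = Bmap ψ j hrank g (Bmap ψ j hrank h v) := by
  rw [Bmap_apply, Bmap_apply, Bmap_apply, LW_mul, LinearIsometryEquiv.symm_apply_apply]

lemma Bmap_norm (j : Fin n) (hrank : Module.finrank ℝ (Wsub ψ j) = m + 1) (g : G)
    (v : EuclideanSpace ℝ (Fin (m + 1))) : ‖Bmap ψ j hrank g v‖ = ‖v‖ :=
  (Bmap ψ j hrank g).norm_map v

lemma Bmap_pow (j : Fin n) (hrank : Module.finrank ℝ (Wsub ψ j) = m + 1) (g : G) (k : ℕ)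
    (v : EuclideanSpace ℝ (Fin (m + 1))) (hv : Bmap ψ j hrank g v = v) :
    Bmap ψ j hrank (g ^ k) v = v := by
  induction k with
  | zero => simpa using Bmap_one ψ j hrank v
  | succ k ih => rw [pow_succ, Bmap_mul, hv, ih]

lemma Bmap_scalar (hc : E ≤ Subgroup.center G) (j : Fin n)
    (hrank : Module.finrank ℝ (Wsub ψ j) = m + 1) (z : E)
    (v : EuclideanSpace ℝ (Fin (m + 1))) :
    Bmap ψ j hrank (z : G) v = chi ψ j z • v := by
  rw [Bmap_apply, LW_scalar ψ hc j z, map_smul, LinearIsometryEquiv.apply_symm_apply]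

lemma Bmap_fix_eq_one_aux (hc : E ≤ Subgroup.center G) (j : Fin n)
    (hrank : Module.finrank ℝ (Wsub ψ j) = m + 1) (z : E) (hz : chi ψ j z = -1)
    (v : EuclideanSpace ℝ (Fin (m + 1))) (hv : Bmap ψ j hrank (z : G) v = v) : v = 0 := by
  rw [Bmap_scalar ψ hc j hrank z v, hz] at hv
  have : (2 : ℝ) • v = 0 := by
    have h := congrArg (fun w => w + v) hv
    simp at h
    rw [two_smul]
    rw [show v + v = 0 from by linear_combination (norm := module) -h]
  simpa using this
end Bmaps

end Part2

section Topo

lemma antipodal_equivalence (m : ℕ) : Equivalence (antipodal m) := by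
  constructor
  · intro x; exact Or.inl rfl
  · intro x y h
    rcases h with h | h
    · exact Or.inl h.symm
    · right; rw [h]; simp
  · intro x y z hxy hyz
    rcases hxy with h1 | h1 <;> rcases hyz with h2 | h2
    · exact Or.inl (h2.trans h1)
    · right; rw [h2, h1]
    · right; rw [h2, h1]
    · left; rw [h2, h1]; simp

/-- Negation on the sphere. -/
def negSph (m : ℕ) (x : Sph m) : Sph m :=
  ⟨-(x : EuclideanSpace ℝ (Fin (m + 1))), by
    have hx := x.2
    rw [mem_sphere_zero_iff_norm] at hx ⊢
    simpa using hx⟩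

lemma continuous_negSph (m : ℕ) : Continuous (negSph m) :=
  Continuous.subtype_mk (continuous_subtype_val.neg) _

lemma negSph_negSph (m : ℕ) (x : Sph m) : negSph m (negSph m x) = x := by
  apply Subtype.ext; simp [negSph]

lemma isOpenQuotientMap_rpmk (m : ℕ) : IsOpenQuotientMap (Quot.mk (antipodal m)) := by
  refine ⟨fun y => Quot.exists_rep y, continuous_quot_mk, ?_⟩
  intro U hU
  rw [← isQuotientMap_quot_mk.isOpen_preimage]
  have hpre : Quot.mk (antipodal m) ⁻¹' (Quot.mk (antipodal m) '' U) = U ∪ negSph m '' U := by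
    ext x
    simp only [Set.mem_preimage, Set.mem_image, Set.mem_union]
    constructor
    · rintro ⟨u, hu, huq⟩
      have hax := ((antipodal_equivalence m).eqvGen_iff).mp (Quot.eq.mp huq)
      rcases hax with h | h
      · left
        have : x = u := Subtype.ext h
        rwa [this]
      · right
        exact ⟨u, hu, (Subtype.ext h.symm : negSph m u = x)⟩
    · rintro (hx | ⟨u, hu, hux⟩)
      · exact ⟨x, hx, rfl⟩
      · refine ⟨u, hu, Quot.sound ?_⟩
        rw [← hux]
        exact Or.inr rfl
  rw [hpre]
  refine hU.union ?_
  have himg : negSph m '' U = negSph m ⁻¹' U := by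
    ext x
    simp only [Set.mem_image, Set.mem_preimage]
    constructor
    · rintro ⟨u, hu, rfl⟩; rwa [negSph_negSph]
    · intro hx; exact ⟨negSph m x, hx, negSph_negSph m x⟩
  rw [himg]
  exact hU.preimage (continuous_negSph m)

end Topo

theorem stmt14 (G : Type) [Group G] [Finite G] (h2 : IsPGroup 2 G)
    -- the 2C condition: every element of order 2 is central
    (h2C : ∀ g : G, orderOf g = 2 → g ∈ Subgroup.center G) :
    ∃ E : Subgroup G,
      (E : Set G) = {g : G | g * g = 1} ∧
      E ≤ Subgroup.center G ∧
      ∃ n : ℕ, Nat.card E = 2 ^ n ∧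
        ∃ (m : ℕ) (ρ : G → (Fin n → Sph m) → (Fin n → Sph m)),
          (∀ x, ρ 1 x = x) ∧
          (∀ g h x, ρ (g * h) x = ρ g (ρ h x)) ∧
          (∀ g, Continuous (ρ g)) ∧
          (∀ g x, ρ g x = x → g = 1) ∧
          Nonempty
            ((Quot fun x y : Fin n → Sph m => ∃ e ∈ E, ρ e x = y) ≃ₜ
              (Fin n → RP m)) := by
  classical
  letI : Fintype G := Fintype.ofFinite G
  haveI : Fact (Nat.Prime 2) := ⟨Nat.prime_two⟩
  set E := Esub h2C with hEdef
  have hc : E ≤ Subgroup.center G := fun g hg => mem_center_of_sq h2C hg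
  have hsq : ∀ z : E, (z : G) * z = 1 := fun z => z.2
  obtain ⟨n, hcard, ⟨ψ⟩⟩ := exists_iso E hsq hc
  refine ⟨E, rfl, hc, n, hcard, ?_⟩
  have hDpos : 0 < Nat.card (G ⧸ E) := Nat.card_pos
  obtain ⟨m, hm⟩ : ∃ m, Nat.card (G ⧸ E) = m + 1 :=
    ⟨Nat.card (G ⧸ E) - 1, (Nat.succ_pred_eq_of_pos hDpos).symm⟩
  have hrank : ∀ j : Fin n, Module.finrank ℝ (Wsub ψ j) = m + 1 := fun j => by
    rw [finrank_W ψ hc j, hm]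
  have hmem : ∀ (g : G) (x : Fin n → Sph m) (j : Fin n),
      Bmap ψ j (hrank j) g ((x j : EuclideanSpace ℝ (Fin (m+1)))) ∈
        Metric.sphere (0 : EuclideanSpace ℝ (Fin (m + 1))) 1 := by
    intro g x j
    rw [mem_sphere_zero_iff_norm, Bmap_norm]
    exact mem_sphere_zero_iff_norm.mp (x j).2
  set ρ : G → (Fin n → Sph m) → (Fin n → Sph m) :=
    fun g x j => ⟨Bmap ψ j (hrank j) g ((x j : EuclideanSpace ℝ (Fin (m+1)))), hmem g x j⟩
    with hρdef
  have hρ_coe : ∀ (g : G) (x : Fin n → Sph m) (j : Fin n),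
      ((ρ g x j : Sph m) : EuclideanSpace ℝ (Fin (m+1)))
        = Bmap ψ j (hrank j) g ((x j : EuclideanSpace ℝ (Fin (m+1)))) := fun _ _ _ => rfl
  refine ⟨m, ρ, ?_, ?_, ?_, ?_, ?_⟩
  · intro x
    funext j
    exact Subtype.ext (Bmap_one ψ j (hrank j) _)
  · intro g h x
    funext j
    exact Subtype.ext (Bmap_mul ψ j (hrank j) g h _)
  · intro g
    refine continuous_pi fun j => Continuous.subtype_mk ?_ _
    exact (Bmap ψ j (hrank j) g).continuous.comp
      (continuous_subtype_val.comp (continuous_apply j))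
  · -- freeness
    intro g x hgx
    by_contra hg
    obtain ⟨a, ha⟩ := IsPGroup.iff_orderOf.mp h2 g
    have ha1 : 1 ≤ a := by
      rcases Nat.eq_zero_or_pos a with rfl | h
      · rw [pow_zero] at ha
        exact absurd (orderOf_eq_one_iff.mp ha) hg
      · exact h
    have hexp : 2 ^ (a - 1) + 2 ^ (a - 1) = 2 ^ a := by
      rw [← two_mul, ← pow_succ', Nat.sub_add_cancel ha1]
    have hz0sq : g ^ 2 ^ (a - 1) * g ^ 2 ^ (a - 1) = 1 := by
      rw [← pow_add, hexp, ← ha, pow_orderOf_eq_one]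
    have hz0mem : g ^ 2 ^ (a - 1) ∈ E := hz0sq
    have hz0ne : g ^ 2 ^ (a - 1) ≠ 1 := by
      intro h
      have hdvd := orderOf_dvd_of_pow_eq_one h
      rw [ha] at hdvd
      have := Nat.le_of_dvd (Nat.pow_pos (by norm_num)) hdvd
      have h2lt : (2:ℕ) ^ (a - 1) < 2 ^ a := Nat.pow_lt_pow_right (by norm_num) (by omega)
      omega
    set z : E := ⟨g ^ 2 ^ (a - 1), hz0mem⟩ with hzdef
    have hψz : (ψ z).toAdd ≠ 0 := by
      intro h
      apply hz0ne
      have h1 : ψ z = 1 := Multiplicative.toAdd.injective (by simpa using h)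
      have h2' : z = 1 := ψ.injective (by rw [h1, map_one])
      exact congrArg Subtype.val h2'
    obtain ⟨j, hj⟩ : ∃ j, (ψ z).toAdd j ≠ 0 := by
      by_contra hall
      push_neg at hall
      exact hψz (funext hall)
    have hchi : chi ψ j z = -1 := sgn_eq_neg_one hj
    have hfix : Bmap ψ j (hrank j) g ((x j : EuclideanSpace ℝ (Fin (m+1))))
        = (x j : EuclideanSpace ℝ (Fin (m+1))) := by
      have := congrFun hgx j
      exact congrArg Subtype.val this
    have hfixz : Bmap ψ j (hrank j) ((z : E) : G) ((x j : EuclideanSpace ℝ (Fin (m+1))))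
        = (x j : EuclideanSpace ℝ (Fin (m+1))) :=
      Bmap_pow ψ j (hrank j) g (2 ^ (a - 1)) _ hfix
    have hzero := Bmap_fix_eq_one_aux ψ hc j (hrank j) z hchi _ hfixz
    have hn1 := mem_sphere_zero_iff_norm.mp (x j).2
    rw [hzero] at hn1
    simp at hn1
  · -- the quotient homeomorphism
    set R : (Fin n → Sph m) → (Fin n → Sph m) → Prop :=
      fun x y => ∃ e ∈ E, ρ e x = y with hR
    have hant : ∀ x y, R x y → ∀ j, antipodal m (x j) (y j) := by
      intro x y hxy j
      obtain ⟨e, he, hre⟩ := hxy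
      have hco : ((y j : Sph m) : EuclideanSpace ℝ (Fin (m+1)))
          = chi ψ j ⟨e, he⟩ • ((x j : Sph m) : EuclideanSpace ℝ (Fin (m+1))) := by
        rw [← hre, hρ_coe]
        exact Bmap_scalar ψ hc j (hrank j) ⟨e, he⟩ _
      rcases chi_cases ψ j ⟨e, he⟩ with hch | hch <;> rw [hch] at hco
      · left; rw [hco, one_smul]
      · right; rw [hco, neg_one_smul]
    let F : (Fin n → Sph m) → (Fin n → RP m) := fun x j => Quot.mk _ (x j)
    have hFsound : ∀ x y, R x y → F x = F y := fun x y h =>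
      funext fun j => Quot.sound (hant x y h j)
    have hFcont : Continuous F := continuous_pi fun j =>
      continuous_quot_mk.comp (continuous_apply j)
    have hker : ∀ x y, F x = F y → Quot.mk R x = Quot.mk R y := by
      intro x y hxy
      have hco : ∀ j, antipodal m (x j) (y j) := fun j =>
        ((antipodal_equivalence m).eqvGen_iff).mp (Quot.eq.mp (congrFun hxy j))
      set ε : Fin n → ZMod 2 := fun j =>
        if ((y j : Sph m) : EuclideanSpace ℝ (Fin (m+1)))
            = ((x j : Sph m) : EuclideanSpace ℝ (Fin (m+1))) then 0 else 1 with hε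
      set e : E := ψ.symm (Multiplicative.ofAdd ε) with he
      have hchie : ∀ j, chi ψ j e = sgn (ε j) := by
        intro j
        show sgn ((ψ e).toAdd j) = sgn (ε j)
        rw [he, MulEquiv.apply_symm_apply]
        simp
      apply Quot.sound
      refine ⟨(e : G), e.2, ?_⟩
      funext j
      apply Subtype.ext
      rw [hρ_coe]
      have hsc : Bmap ψ j (hrank j) ((e : E) : G) ((x j : EuclideanSpace ℝ (Fin (m+1))))
          = chi ψ j e • ((x j : Sph m) : EuclideanSpace ℝ (Fin (m+1))) :=
        Bmap_scalar ψ hc j (hrank j) e _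
      rw [hsc, hchie j]
      by_cases hxyj : ((y j : Sph m) : EuclideanSpace ℝ (Fin (m+1)))
          = ((x j : Sph m) : EuclideanSpace ℝ (Fin (m+1)))
      · rw [hε]
        simp only [if_pos hxyj, sgn_zero, one_smul]
        exact hxyj.symm
      · have hneg : ((y j : Sph m) : EuclideanSpace ℝ (Fin (m+1)))
            = -((x j : Sph m) : EuclideanSpace ℝ (Fin (m+1))) := (hco j).resolve_left hxyj
        rw [hε]
        simp only [if_neg hxyj]
        rw [sgn_eq_neg_one one_ne_zero, neg_one_smul]
        exact hneg.symm
    let φ0 : Quot R → (Fin n → RP m) := Quot.lift F hFsound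
    have hbij : Function.Bijective φ0 := by
      constructor
      · intro a b
        induction a using Quot.ind with
        | _ x =>
          induction b using Quot.ind with
          | _ y => exact fun h => hker x y h
      · intro f
        exact ⟨Quot.mk R (fun j => Quot.out (f j)), funext fun j => Quot.out_eq (f j)⟩
    let eqv := Equiv.ofBijective φ0 hbij
    refine ⟨⟨eqv, ?_, ?_⟩⟩
    · exact continuous_quot_lift _ hFcont
    · have hP : IsOpenQuotientMap (Pi.map fun (_ : Fin n) => Quot.mk (antipodal m)) :=
        IsOpenQuotientMap.piMap fun _ => isOpenQuotientMap_rpmk m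
      refine hP.isQuotientMap.continuous_iff.mpr ?_
      have hQ : Continuous (Quot.mk R) := continuous_quot_mk
      convert hQ using 1
      funext x
      show eqv.symm (Pi.map (fun _ => Quot.mk (antipodal m)) x) = Quot.mk R x
      apply eqv.injective
      rw [Equiv.apply_symm_apply]
      rfl
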